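/- Let μ be a positive Borel measure on T with monic Szegő polynomials P_l and reciprocals P_l^*, and let {φ_{n⃗,1}^{(l)}} be the extended-CMV orthogonal Laurent polynomials for an arbitrary ordering vector n⃗ = (n_+, n_-). Then z^{ν_-(l)} φ_{n⃗,1}^{(l)}(z) = P_l(z) when a(l) = 1, and z^{ν_-(l)} φ_{n⃗,1}^{(l)}(z) = P_l^*(z) when a(l) = 2. -/

import Mathlib

open MeasureTheory

/-- In the extended CMV ordering with block sizes `n₊, n₋`, the `l`-th monomial is a
nonnegative power (`a(l) = 1`) iff `l mod (n₊+n₋) < n₊`; otherwise `a(l) = 2`. -/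
def extA (np nm l : ℕ) : ℕ := if l % (np + nm) < np then 1 else 2

/-- `ν₊(l)`: the number of nonnegative-power monomials among indices `0, …, l`. -/
def extNuP (np nm l : ℕ) : ℕ :=
  ((Finset.range (l + 1)).filter fun k => extA np nm k = 1).card

/-- `ν₋(l)`: the number of negative-power monomials among indices `0, …, l`. -/
def extNuM (np nm l : ℕ) : ℕ :=
  ((Finset.range (l + 1)).filter fun k => extA np nm k = 2).card

/-- Let `μ` be a (finite, nondegenerate) positive Borel measure on the circle with monic
Szegő polynomials `P_l` and reciprocals `P_l^*`, and let `φ⁽ˡ⁾` be the extended-CMV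
orthogonal Laurent polynomials for an arbitrary ordering vector `n⃗ = (n₊, n₋)`
(lying in `span{z^{−ν₋(l)},…,z^{ν₊(l)−1}}`, suitably normalized, and orthogonal to
`z^k` for `k = −ν₋(l−1),…,ν₊(l−1)−1`).  Then `z^{ν₋(l)} φ⁽ˡ⁾(z) = P_l(z)` when
`a(l) = 1`, and `z^{ν₋(l)} φ⁽ˡ⁾(z) = P_l^*(z)` when `a(l) = 2`. -/
noncomputable def Wc (θ : ℝ) : ℂ := Complex.exp ((θ:ℂ) * Complex.I)

lemma Wc_ne (θ : ℝ) : Wc θ ≠ 0 := Complex.exp_ne_zero _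

lemma norm_Wc (θ : ℝ) : ‖Wc θ‖ = 1 := by
  simpa [Wc] using Complex.norm_exp_ofReal_mul_I θ

lemma cont_Wc : Continuous Wc :=
  Complex.continuous_exp.comp (Complex.continuous_ofReal.mul continuous_const)

lemma integrable_Wc_zpow (μ : Measure ℝ) [IsFiniteMeasure μ] (m : ℤ) :
    Integrable (fun θ => Wc θ ^ m) μ := by
  refine ⟨(cont_Wc.zpow₀ m fun θ => Or.inl (Wc_ne θ)).aestronglyMeasurable, ?_⟩
  apply HasFiniteIntegral.of_bounded (C := 1)
  filter_upwards with θ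
  rw [norm_zpow, norm_Wc, one_zpow]

noncomputable def Mom (μ : Measure ℝ) (m : ℤ) : ℂ := ∫ θ, Wc θ ^ m ∂μ

lemma integrable_comb (μ : Measure ℝ) [IsFiniteMeasure μ] {ι : Type*} (s : Finset ι)
    (d : ι → ℂ) (m : ι → ℤ) :
    Integrable (fun θ => ∑ j ∈ s, d j * Wc θ ^ m j) μ :=
  integrable_finset_sum s fun j _ => (integrable_Wc_zpow μ (m j)).const_mul _

lemma integral_comb (μ : Measure ℝ) [IsFiniteMeasure μ] {ι : Type*} (s : Finset ι)
    (d : ι → ℂ) (m : ι → ℤ) :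
    ∫ θ, ∑ j ∈ s, d j * Wc θ ^ m j ∂μ = ∑ j ∈ s, d j * Mom μ (m j) := by
  rw [integral_finset_sum s fun j _ => (integrable_Wc_zpow μ (m j)).const_mul _]
  exact Finset.sum_congr rfl fun j _ => integral_const_mul _ _

lemma conj_Wc (θ : ℝ) : (starRingEnd ℂ) (Wc θ) = (Wc θ)⁻¹ := by
  rw [Wc, ← Complex.exp_conj, ← Complex.exp_neg]
  congr 1
  simp [Complex.conj_I]

lemma conj_Mom (μ : Measure ℝ) (m : ℤ) : (starRingEnd ℂ) (Mom μ m) = Mom μ (-m) := by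
  rw [Mom, Mom, ← integral_conj]
  congr 1
  funext θ
  rw [map_zpow₀, conj_Wc, inv_zpow, ← zpow_neg]

lemma key_zero (μ : Measure ℝ) [IsFiniteMeasure μ]
    (hpd : ∀ (n : ℕ) (c : ℕ → ℂ),
      (∫ θ, Complex.normSq (∑ j ∈ Finset.range n,
        c j * Complex.exp ((θ : ℂ) * Complex.I) ^ j) ∂μ) = 0 → ∀ j < n, c j = 0)
    (n : ℕ) (d : ℕ → ℂ)
    (h : ∀ k < n, ∑ j ∈ Finset.range n, d j * Mom μ ((j:ℤ) - k) = 0) :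
    ∀ j < n, d j = 0 := by
  apply hpd n d
  have hpt : (fun θ : ℝ => ((Complex.normSq (∑ j ∈ Finset.range n,
        d j * Complex.exp ((θ : ℂ) * Complex.I) ^ j) : ℝ) : ℂ))
      = fun θ => ∑ k ∈ Finset.range n, (starRingEnd ℂ) (d k) *
          ∑ j ∈ Finset.range n, d j * Wc θ ^ ((j:ℤ) - k) := by
    funext θ
    set w := Wc θ with hw
    have hwne : w ≠ 0 := Wc_ne θ
    have hsum : (∑ j ∈ Finset.range n, d j * Complex.exp ((θ : ℂ) * Complex.I) ^ j)
        = ∑ j ∈ Finset.range n, d j * w ^ (j:ℤ) := by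
      simp [hw, Wc, zpow_natCast]
    rw [hsum, ← Complex.mul_conj, map_sum, Finset.mul_sum]
    refine Finset.sum_congr rfl fun k _ => ?_
    rw [map_mul, map_zpow₀, conj_Wc, inv_zpow, ← zpow_neg, Finset.sum_mul, Finset.mul_sum]
    refine Finset.sum_congr rfl fun j _ => ?_
    rw [show (j:ℤ) - (k:ℤ) = (j:ℤ) + -(k:ℤ) from sub_eq_add_neg _ _, zpow_add₀ hwne]
    ring
  have hzero : (∫ θ, ((Complex.normSq (∑ j ∈ Finset.range n,
        d j * Complex.exp ((θ : ℂ) * Complex.I) ^ j) : ℝ) : ℂ) ∂μ) = 0 := by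
    have hfs := integral_finset_sum (μ := μ) (Finset.range n)
      (f := fun k θ => (starRingEnd ℂ) (d k) *
        ∑ j ∈ Finset.range n, d j * Wc θ ^ ((j:ℤ) - k))
      (fun k _ => (integrable_comb μ (Finset.range n) d fun j => (j:ℤ) - k).const_mul _)
    rw [hpt, hfs]
    refine Finset.sum_eq_zero fun k hk => ?_
    rw [integral_const_mul, integral_comb, h k (Finset.mem_range.mp hk), mul_zero]
  refine Complex.ofReal_injective ?_
  rw [Complex.ofReal_zero]
  calc ((∫ θ, Complex.normSq (∑ j ∈ Finset.range n,
        d j * Complex.exp ((θ : ℂ) * Complex.I) ^ j) ∂μ : ℝ) : ℂ)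
      = ∫ θ, ((Complex.normSq (∑ j ∈ Finset.range n,
        d j * Complex.exp ((θ : ℂ) * Complex.I) ^ j) : ℝ) : ℂ) ∂μ := integral_ofReal.symm
    _ = 0 := hzero

lemma extA_cases (np nm k : ℕ) : extA np nm k = 1 ∨ extA np nm k = 2 := by
  unfold extA; split <;> simp

lemma extA_two_iff (np nm k : ℕ) : extA np nm k = 2 ↔ ¬ extA np nm k = 1 := by
  unfold extA; split <;> simp

lemma nu_sum (np nm m : ℕ) : extNuP np nm m + extNuM np nm m = m + 1 := by
  rw [extNuP, extNuM]
  rw [Finset.filter_congr (fun k _ => by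
    rw [extA_two_iff] : ∀ k ∈ Finset.range (m+1), (extA np nm k = 2 ↔ ¬ extA np nm k = 1))]
  rw [Finset.card_filter_add_card_filter_not, Finset.card_range]

lemma nu_rec (np nm m : ℕ) : extNuM np nm (m+1)
    = extNuM np nm m + (if extA np nm (m+1) = 2 then 1 else 0) := by
  rw [extNuM, extNuM, Finset.range_add_one, Finset.filter_insert]
  split
  · rw [Finset.card_insert_of_notMem (fun h => by
      simpa using Finset.mem_of_mem_filter _ h)]
  · simp

lemma extA_zero (np nm : ℕ) (hnp : 1 ≤ np) : extA np nm 0 = 1 := by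
  unfold extA
  rw [if_pos (by rw [Nat.zero_mod]; omega)]

lemma nuM_zero (np nm : ℕ) (hnp : 1 ≤ np) : extNuM np nm 0 = 0 := by
  rw [extNuM]
  convert Finset.card_empty
  rw [Finset.filter_eq_empty_iff]
  intro k hk
  simp only [Finset.mem_range] at hk
  interval_cases k
  rw [extA_zero np nm hnp]
  omega

theorem stmt_17 (np nm : ℕ) (hnp : 1 ≤ np) (hnm : 1 ≤ nm)
    (μ : Measure ℝ) [IsFiniteMeasure μ]
    (hpd : ∀ (n : ℕ) (c : ℕ → ℂ),
      (∫ θ, Complex.normSq (∑ j ∈ Finset.range n,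
        c j * Complex.exp ((θ : ℂ) * Complex.I) ^ j) ∂μ) = 0 → ∀ j < n, c j = 0)
    (p : ℕ → ℕ → ℂ) (hmonic : ∀ l, p l l = 1)
    (P : ℕ → ℂ → ℂ)
    (hP : ∀ l z, P l z = ∑ j ∈ Finset.range (l + 1), p l j * z ^ j)
    (hPorth : ∀ l k, k < l →
      (∫ θ, P l (Complex.exp ((θ : ℂ) * Complex.I)) *
        Complex.exp (-(k : ℂ) * (θ : ℂ) * Complex.I) ∂μ) = 0)
    (φ : ℕ → ℂ → ℂ)
    (hφform : ∀ l : ℕ, ∃ c : ℕ → ℂ,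
      (extA np nm l = 1 → c l = 1) ∧ (extA np nm l = 2 → c 0 = 1) ∧
      ∀ z : ℂ, z ≠ 0 → φ l z =
        ∑ j ∈ Finset.range (l + 1), c j * z ^ ((j : ℤ) - (extNuM np nm l : ℤ)))
    (hφorth : ∀ l : ℕ, 1 ≤ l → ∀ k : ℤ,
      -(extNuM np nm (l - 1) : ℤ) ≤ k → k ≤ (extNuP np nm (l - 1) : ℤ) - 1 →
      (∫ θ, φ l (Complex.exp ((θ : ℂ) * Complex.I)) *
        Complex.exp (-(k : ℂ) * (θ : ℂ) * Complex.I) ∂μ) = 0) :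
    ∀ (l : ℕ) (z : ℂ), z ≠ 0 →
      (extA np nm l = 1 → z ^ (extNuM np nm l : ℤ) * φ l z = P l z) ∧
      (extA np nm l = 2 → z ^ (extNuM np nm l : ℤ) * φ l z =
        ∑ j ∈ Finset.range (l + 1), (starRingEnd ℂ) (p l j) * z ^ (l - j)) := by
  -- moment form of the Szegő orthogonality
  have hPm : ∀ (l k : ℕ), k < l →
      ∑ j ∈ Finset.range (l + 1), p l j * Mom μ ((j : ℤ) - k) = 0 := by
    intro l k hk
    have h0 := hPorth l k hk
    have hfun : (fun θ : ℝ => P l (Complex.exp ((θ : ℂ) * Complex.I)) *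
          Complex.exp (-(k : ℂ) * (θ : ℂ) * Complex.I))
        = fun θ => ∑ j ∈ Finset.range (l + 1), p l j * Wc θ ^ ((j : ℤ) - k) := by
      funext θ
      simp only [Wc]
      have hek : Complex.exp (-(k : ℂ) * (θ : ℂ) * Complex.I)
          = Complex.exp ((θ : ℂ) * Complex.I) ^ (-(k : ℤ)) := by
        rw [← Complex.exp_int_mul]
        congr 1
        push_cast
        ring
      rw [hP, hek, Finset.sum_mul]
      refine Finset.sum_congr rfl fun j _ => ?_
      rw [mul_assoc, ← zpow_natCast (Complex.exp ((θ : ℂ) * Complex.I)) j,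
        ← zpow_add₀ (Complex.exp_ne_zero _), sub_eq_add_neg]
    rw [hfun] at h0
    rwa [integral_comb] at h0
  -- conjugated moment form of the Szegő orthogonality
  have hPm2 : ∀ (l k : ℕ), 1 ≤ k → k ≤ l →
      ∑ j ∈ Finset.range (l + 1), (starRingEnd ℂ) (p l j) * Mom μ ((l : ℤ) - j - k) = 0 := by
    intro l k h1k hkl
    have h0 := congrArg (starRingEnd ℂ) (hPm l (l - k) (by omega))
    rw [map_sum, map_zero] at h0
    rw [← h0]
    refine Finset.sum_congr rfl fun j hj => ?_
    rw [map_mul, conj_Mom,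
      show ((l : ℤ) - j - k) = -((j : ℤ) - ((l - k : ℕ) : ℤ)) from by omega]
  intro l z hz
  obtain ⟨c, hc1, hc2, hcform⟩ := hφform l
  -- moment form of the φ orthogonality
  have hφm : 1 ≤ l → ∀ k : ℤ,
      -(extNuM np nm (l - 1) : ℤ) ≤ k → k ≤ (extNuP np nm (l - 1) : ℤ) - 1 →
      ∑ j ∈ Finset.range (l + 1),
        c j * Mom μ ((j : ℤ) - (extNuM np nm l : ℤ) - k) = 0 := by
    intro hl k hb1 hb2
    have h0 := hφorth l hl k hb1 hb2
    have hfun : (fun θ : ℝ => φ l (Complex.exp ((θ : ℂ) * Complex.I)) *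
          Complex.exp (-(k : ℂ) * (θ : ℂ) * Complex.I))
        = fun θ => ∑ j ∈ Finset.range (l + 1),
            c j * Wc θ ^ ((j : ℤ) - (extNuM np nm l : ℤ) - k) := by
      funext θ
      simp only [Wc]
      have hek : Complex.exp (-(k : ℂ) * (θ : ℂ) * Complex.I)
          = Complex.exp ((θ : ℂ) * Complex.I) ^ (-k) := by
        rw [← Complex.exp_int_mul]
        congr 1
        push_cast
        ring
      rw [hcform _ (Complex.exp_ne_zero _), hek, Finset.sum_mul]
      refine Finset.sum_congr rfl fun j _ => ?_
      rw [mul_assoc, ← zpow_add₀ (Complex.exp_ne_zero _),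
        sub_eq_add_neg ((j : ℤ) - (extNuM np nm l : ℤ)) k]
    rw [hfun] at h0
    rwa [integral_comb] at h0
  constructor
  · -- case a(l) = 1
    intro ha
    have hd : ∀ k < l, ∑ j ∈ Finset.range l,
        (c j - p l j) * Mom μ ((j : ℤ) - k) = 0 := by
      intro k hk
      have hl : 1 ≤ l := by omega
      obtain ⟨m, rfl⟩ : ∃ m, l = m + 1 := ⟨l - 1, by omega⟩
      have hnu : extNuM np nm (m + 1) = extNuM np nm m := by
        rw [nu_rec]
        simp [ha]
      have hsm := nu_sum np nm m
      have hb1 : -(extNuM np nm (m + 1 - 1) : ℤ) ≤ (k : ℤ) - extNuM np nm m := by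
        simp only [Nat.add_sub_cancel]
        omega
      have hb2 : (k : ℤ) - extNuM np nm m ≤ (extNuP np nm (m + 1 - 1) : ℤ) - 1 := by
        simp only [Nat.add_sub_cancel]
        omega
      have h1 := hφm hl ((k : ℤ) - extNuM np nm m) hb1 hb2
      have h1' : ∑ j ∈ Finset.range (m + 2), c j * Mom μ ((j : ℤ) - k) = 0 := by
        rw [← h1]
        refine Finset.sum_congr rfl fun j _ => ?_
        rw [show ((j : ℤ) - (extNuM np nm (m + 1) : ℤ) - ((k : ℤ) - extNuM np nm m))
          = (j : ℤ) - k from by omega]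
      have h2 := hPm (m + 1) k hk
      have h3 : ∑ j ∈ Finset.range (m + 2),
          (c j - p (m + 1) j) * Mom μ ((j : ℤ) - k) = 0 := by
        have := Finset.sum_congr rfl (fun j (_ : j ∈ Finset.range (m + 2)) =>
          sub_mul (c j) (p (m + 1) j) (Mom μ ((j : ℤ) - k)))
        rw [this, Finset.sum_sub_distrib, h1', h2, sub_zero]
      rw [Finset.sum_range_succ, hc1 ha, hmonic, sub_self, zero_mul, add_zero] at h3
      exact h3
    have hco := key_zero μ hpd l (fun j => c j - p l j) hd
    rw [hcform z hz, hP, Finset.mul_sum]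
    refine Finset.sum_congr rfl fun j hj => ?_
    have hjl : j ≤ l := by have := Finset.mem_range.mp hj; omega
    have hcj : c j = p l j := by
      rcases eq_or_lt_of_le hjl with h | h
      · rw [h, hc1 ha, hmonic]
      · have := hco j h
        linear_combination this
    have hzz : z ^ ((extNuM np nm l : ℤ)) * z ^ ((j : ℤ) - (extNuM np nm l : ℤ))
        = z ^ j := by
      rw [← zpow_add₀ hz, ← zpow_natCast z j]
      congr 1
      ring
    calc z ^ ((extNuM np nm l : ℤ)) * (c j * z ^ ((j : ℤ) - (extNuM np nm l : ℤ)))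
        = c j * (z ^ ((extNuM np nm l : ℤ)) * z ^ ((j : ℤ) - (extNuM np nm l : ℤ))) := by
          ring
      _ = p l j * z ^ j := by rw [hzz, hcj]
  · -- case a(l) = 2
    intro ha
    -- reflected conjugate Szegő orthogonality
    have hS : ∀ k : ℕ, 1 ≤ k → k ≤ l →
        ∑ j ∈ Finset.range (l + 1),
          (starRingEnd ℂ) (p l (l - j)) * Mom μ ((j : ℤ) - k) = 0 := by
      intro k h1k hkl
      have h0 := hPm2 l k h1k hkl
      have hr := Finset.sum_range_reflect
        (fun j => (starRingEnd ℂ) (p l j) * Mom μ ((l : ℤ) - j - k)) (l + 1)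
      rw [h0] at hr
      rw [← hr]
      refine Finset.sum_congr rfl fun j hj => ?_
      have hjl : j ≤ l := by have := Finset.mem_range.mp hj; omega
      have he1 : l + 1 - 1 - j = l - j := by omega
      rw [he1, show ((j : ℤ) - (k : ℕ)) = (l : ℤ) - ((l - j : ℕ) : ℤ) - (k : ℕ) from by omega]
    have hd : ∀ k < l, ∑ j ∈ Finset.range l,
        (c (j + 1) - (starRingEnd ℂ) (p l (l - (j + 1)))) * Mom μ ((j : ℤ) - k) = 0 := by
      intro k hk
      have hl : 1 ≤ l := by omega
      obtain ⟨m, rfl⟩ : ∃ m, l = m + 1 := ⟨l - 1, by omega⟩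
      have hnu : extNuM np nm (m + 1) = extNuM np nm m + 1 := by
        rw [nu_rec]
        simp [ha]
      have hsm := nu_sum np nm m
      have hb1 : -(extNuM np nm (m + 1 - 1) : ℤ) ≤ (k : ℤ) + 1 - extNuM np nm (m + 1) := by
        simp only [Nat.add_sub_cancel]
        omega
      have hb2 : (k : ℤ) + 1 - extNuM np nm (m + 1) ≤ (extNuP np nm (m + 1 - 1) : ℤ) - 1 := by
        simp only [Nat.add_sub_cancel]
        omega
      have h1 := hφm hl ((k : ℤ) + 1 - extNuM np nm (m + 1)) hb1 hb2
      have h1' : ∑ j ∈ Finset.range (m + 2), c j * Mom μ ((j : ℤ) - (k + 1)) = 0 := by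
        rw [← h1]
        refine Finset.sum_congr rfl fun j _ => ?_
        rw [show ((j : ℤ) - (extNuM np nm (m + 1) : ℤ)
            - ((k : ℤ) + 1 - extNuM np nm (m + 1))) = (j : ℤ) - (k + 1) from by omega]
      have h2 := hS (k + 1) (by omega) (by omega)
      have h2' : ∑ j ∈ Finset.range (m + 2),
          (starRingEnd ℂ) (p (m + 1) (m + 1 - j)) * Mom μ ((j : ℤ) - (k + 1)) = 0 := by
        rw [← h2]
        refine Finset.sum_congr rfl fun j _ => ?_
        rw [show ((j : ℤ) - ((k : ℤ) + 1)) = (j : ℤ) - ((k + 1 : ℕ) : ℤ) from by push_cast; ring]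
      have h3 : ∑ j ∈ Finset.range (m + 2),
          (c j - (starRingEnd ℂ) (p (m + 1) (m + 1 - j))) * Mom μ ((j : ℤ) - (k + 1)) = 0 := by
        have := Finset.sum_congr rfl (fun j (_ : j ∈ Finset.range (m + 2)) =>
          sub_mul (c j) ((starRingEnd ℂ) (p (m + 1) (m + 1 - j))) (Mom μ ((j : ℤ) - (k + 1))))
        rw [this, Finset.sum_sub_distrib, h1', h2', sub_zero]
      rw [Finset.sum_range_succ'] at h3
      have hz0 : (c 0 - (starRingEnd ℂ) (p (m + 1) (m + 1 - 0))) * Mom μ (((0 : ℕ) : ℤ) - ((k : ℤ) + 1)) = 0 := by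
        rw [Nat.sub_zero, hc2 ha, hmonic, map_one, sub_self, zero_mul]
      rw [hz0, add_zero] at h3
      rw [← h3]
      refine Finset.sum_congr rfl fun j _ => ?_
      rw [show ((j : ℤ) - (k : ℤ)) = (((j + 1 : ℕ) : ℤ)) - ((k : ℤ) + 1) from by push_cast; ring]
    have hco := key_zero μ hpd l
      (fun j => c (j + 1) - (starRingEnd ℂ) (p l (l - (j + 1)))) hd
    have hcoef : ∀ j, j ≤ l → c j = (starRingEnd ℂ) (p l (l - j)) := by
      intro j hjl
      rcases Nat.eq_zero_or_pos j with h | h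
      · rw [h, hc2 ha, Nat.sub_zero, hmonic, map_one]
      · obtain ⟨i, rfl⟩ : ∃ i, j = i + 1 := ⟨j - 1, by omega⟩
        have := hco i (by omega)
        linear_combination this
    rw [hcform z hz, Finset.mul_sum,
      ← Finset.sum_range_reflect (fun j => (starRingEnd ℂ) (p l j) * z ^ (l - j)) (l + 1)]
    refine Finset.sum_congr rfl fun j hj => ?_
    have hjl : j ≤ l := by have := Finset.mem_range.mp hj; omega
    have he1 : l + 1 - 1 - j = l - j := by omega
    have he2 : l - (l - j) = j := by omega
    rw [he1, he2]
    have hzz : z ^ ((extNuM np nm l : ℤ)) * z ^ ((j : ℤ) - (extNuM np nm l : ℤ))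
        = z ^ j := by
      rw [← zpow_add₀ hz, ← zpow_natCast z j]
      congr 1
      ring
    calc z ^ ((extNuM np nm l : ℤ)) * (c j * z ^ ((j : ℤ) - (extNuM np nm l : ℤ)))
        = c j * (z ^ ((extNuM np nm l : ℤ)) * z ^ ((j : ℤ) - (extNuM np nm l : ℤ))) := by
          ring
      _ = (starRingEnd ℂ) (p l (l - j)) * z ^ j := by rw [hzz, hcoef j hjl]
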